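/- Let A1, A2 be invertible n×n real matrices and A3, A4, B1, B2 be n×n real matrices. Let [l_x,u_x], [l_y,u_y], [l_wx,u_wx], [l_wy,u_wy], [l_m,u_m] be boxes in ℝⁿ, and suppose x ∈ [l_x,u_x], y ∈ [l_y,u_y], wx ∈ [l_wx,u_wx], wy ∈ [l_wy,u_wy], and A1x + A2y + B1wx ∈ [l_m,u_m]. Define the boxes 𝓜x = Ψ(A1⁻¹)[l_m,u_m] ⊕ Ψ(−A1⁻¹A2)[l_y,u_y] ⊕ Ψ(−A1⁻¹B1)[l_wx,u_wx] and 𝓜y = Ψ(A2⁻¹)[l_m,u_m] ⊕ Ψ(−A2⁻¹A1)[l_x,u_x] ⊕ Ψ(−A2⁻¹B1)[l_wx,u_wx], where the Minkowski sum of boxes is the box whose endpoints are the sums of the endpoints. Let 𝒳' be the box with lower endpoint max{lower(𝓜x), l_x} and upper endpoint min{upper(𝓜x), u_x} (componentwise), and 𝒴' the analogous componentwise intersection of 𝓜y with [l_y,u_y]. Then the true next private state A3x + A4y + B2wy belongs to the box Ψ(A3)𝒳' ⊕ Ψ(A4)𝒴' ⊕ Ψ(B2)[l_wy,u_wy]. 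-/
import Mathlib


open Matrix

/-- A⁺ = (A + |A|)/2. -/
noncomputable def matPos {n : ℕ} (A : Matrix (Fin n) (Fin n) ℝ) :
    Matrix (Fin n) (Fin n) ℝ := Matrix.of fun i j => (A i j + |A i j|) / 2

/-- A⁻ = (A − |A|)/2. -/
noncomputable def matNeg {n : ℕ} (A : Matrix (Fin n) (Fin n) ℝ) :
    Matrix (Fin n) (Fin n) ℝ := Matrix.of fun i j => (A i j - |A i j|) / 2

/-- Lower endpoint of Ψ(A)[l,u] = [A⁺l + A⁻u, A⁻l + A⁺u]. -/
noncomputable def psiLo {n : ℕ} (A : Matrix (Fin n) (Fin n) ℝ) (l u : Fin n → ℝ) :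
    Fin n → ℝ := (matPos A).mulVec l + (matNeg A).mulVec u

/-- Upper endpoint of Ψ(A)[l,u] = [A⁺l + A⁻u, A⁻l + A⁺u]. -/
noncomputable def psiHi {n : ℕ} (A : Matrix (Fin n) (Fin n) ℝ) (l u : Fin n → ℝ) :
    Fin n → ℝ := (matNeg A).mulVec l + (matPos A).mulVec u

lemma psi_lo_le {n : ℕ} (A : Matrix (Fin n) (Fin n) ℝ) {l u v : Fin n → ℝ}
    (h₁ : l ≤ v) (h₂ : v ≤ u) : psiLo A l u ≤ A.mulVec v := by
  intro i
  have hA : ∀ j, A i j = matPos A i j + matNeg A i j := by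
    intro j; simp [matPos, matNeg]; ring
  simp only [psiLo, Pi.add_apply, Matrix.mulVec, dotProduct]
  rw [← Finset.sum_add_distrib]
  apply Finset.sum_le_sum
  intro j _
  rw [hA j, add_mul]
  have hp : (0:ℝ) ≤ matPos A i j := by
    simp [matPos]; linarith [neg_abs_le (A i j)]
  have hn : matNeg A i j ≤ 0 := by
    simp [matNeg]; linarith [le_abs_self (A i j)]
  have := mul_le_mul_of_nonneg_left (h₁ j) hp
  have := mul_le_mul_of_nonpos_left (h₂ j) hn
  linarith

lemma psi_le_hi {n : ℕ} (A : Matrix (Fin n) (Fin n) ℝ) {l u v : Fin n → ℝ}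
    (h₁ : l ≤ v) (h₂ : v ≤ u) : A.mulVec v ≤ psiHi A l u := by
  intro i
  have hA : ∀ j, A i j = matPos A i j + matNeg A i j := by
    intro j; simp [matPos, matNeg]; ring
  simp only [psiHi, Pi.add_apply, Matrix.mulVec, dotProduct]
  rw [← Finset.sum_add_distrib]
  apply Finset.sum_le_sum
  intro j _
  rw [hA j, add_mul]
  have hp : (0:ℝ) ≤ matPos A i j := by
    simp [matPos]; linarith [neg_abs_le (A i j)]
  have hn : matNeg A i j ≤ 0 := by
    simp [matNeg]; linarith [le_abs_self (A i j)]
  have := mul_le_mul_of_nonneg_left (h₂ j) hp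
  have := mul_le_mul_of_nonpos_left (h₁ j) hn
  linarith

/-- Soundness of the interval-based one-step inference attack (Lemma 1):
the true next private state A3·x + A4·y + B2·wy lies in the box
Ψ(A3)𝒳' ⊕ Ψ(A4)𝒴' ⊕ Ψ(B2)[l_wy,u_wy], where 𝒳', 𝒴' are the calibrated boxes. -/
theorem interval_inference_sound {n : ℕ}
    (A1 A2 A3 A4 B1 B2 : Matrix (Fin n) (Fin n) ℝ)
    (hA1 : IsUnit A1.det) (hA2 : IsUnit A2.det)
    (lx ux ly uy lwx uwx lwy uwy lm um : Fin n → ℝ)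
    (x y wx wy : Fin n → ℝ)
    (hx₁ : lx ≤ x) (hx₂ : x ≤ ux)
    (hy₁ : ly ≤ y) (hy₂ : y ≤ uy)
    (hwx₁ : lwx ≤ wx) (hwx₂ : wx ≤ uwx)
    (hwy₁ : lwy ≤ wy) (hwy₂ : wy ≤ uwy)
    (hm₁ : lm ≤ A1.mulVec x + A2.mulVec y + B1.mulVec wx)
    (hm₂ : A1.mulVec x + A2.mulVec y + B1.mulVec wx ≤ um)
    (MxLo MxHi MyLo MyHi X'lo X'hi Y'lo Y'hi : Fin n → ℝ)
    (hMxLo : MxLo = psiLo A1⁻¹ lm um + psiLo (-(A1⁻¹ * A2)) ly uy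
                    + psiLo (-(A1⁻¹ * B1)) lwx uwx)
    (hMxHi : MxHi = psiHi A1⁻¹ lm um + psiHi (-(A1⁻¹ * A2)) ly uy
                    + psiHi (-(A1⁻¹ * B1)) lwx uwx)
    (hMyLo : MyLo = psiLo A2⁻¹ lm um + psiLo (-(A2⁻¹ * A1)) lx ux
                    + psiLo (-(A2⁻¹ * B1)) lwx uwx)
    (hMyHi : MyHi = psiHi A2⁻¹ lm um + psiHi (-(A2⁻¹ * A1)) lx ux
                    + psiHi (-(A2⁻¹ * B1)) lwx uwx)
    (hX'lo : X'lo = MxLo ⊔ lx) (hX'hi : X'hi = MxHi ⊓ ux)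
    (hY'lo : Y'lo = MyLo ⊔ ly) (hY'hi : Y'hi = MyHi ⊓ uy) :
    psiLo A3 X'lo X'hi + psiLo A4 Y'lo Y'hi + psiLo B2 lwy uwy
      ≤ A3.mulVec x + A4.mulVec y + B2.mulVec wy ∧
    A3.mulVec x + A4.mulVec y + B2.mulVec wy
      ≤ psiHi A3 X'lo X'hi + psiHi A4 Y'lo Y'hi + psiHi B2 lwy uwy := by
  
  set m := A1.mulVec x + A2.mulVec y + B1.mulVec wx with hm
  have decomp : ∀ (A B C : Matrix (Fin n) (Fin n) ℝ) (v w : Fin n → ℝ),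
      IsUnit A.det → m = A.mulVec v + B.mulVec w + C.mulVec wx →
      A⁻¹.mulVec m + (-(A⁻¹ * B)).mulVec w + (-(A⁻¹ * C)).mulVec wx = v := by
    intro A B C v w hA hme
    rw [hme]
    simp only [Matrix.mulVec_add, Matrix.mulVec_mulVec, Matrix.neg_mulVec,
      Matrix.nonsing_inv_mul A hA, Matrix.one_mulVec]
    abel
  have hdx : A1⁻¹.mulVec m + (-(A1⁻¹ * A2)).mulVec y + (-(A1⁻¹ * B1)).mulVec wx = x :=
    decomp A1 A2 B1 x y hA1 rfl
  have hdy : A2⁻¹.mulVec m + (-(A2⁻¹ * A1)).mulVec x + (-(A2⁻¹ * B1)).mulVec wx = y :=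
    decomp A2 A1 B1 y x hA2 (by rw [hm]; abel)
  have hxlo : MxLo ≤ x := by
    rw [hMxLo, ← hdx]
    exact add_le_add (add_le_add (psi_lo_le _ hm₁ hm₂) (psi_lo_le _ hy₁ hy₂))
      (psi_lo_le _ hwx₁ hwx₂)
  have hxhi : x ≤ MxHi := by
    rw [hMxHi, ← hdx]
    exact add_le_add (add_le_add (psi_le_hi _ hm₁ hm₂) (psi_le_hi _ hy₁ hy₂))
      (psi_le_hi _ hwx₁ hwx₂)
  have hylo : MyLo ≤ y := by
    rw [hMyLo, ← hdy]
    exact add_le_add (add_le_add (psi_lo_le _ hm₁ hm₂) (psi_lo_le _ hx₁ hx₂))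
      (psi_lo_le _ hwx₁ hwx₂)
  have hyhi : y ≤ MyHi := by
    rw [hMyHi, ← hdy]
    exact add_le_add (add_le_add (psi_le_hi _ hm₁ hm₂) (psi_le_hi _ hx₁ hx₂))
      (psi_le_hi _ hwx₁ hwx₂)
  have hX1 : X'lo ≤ x := by rw [hX'lo]; exact sup_le hxlo hx₁
  have hX2 : x ≤ X'hi := by rw [hX'hi]; exact le_inf hxhi hx₂
  have hY1 : Y'lo ≤ y := by rw [hY'lo]; exact sup_le hylo hy₁
  have hY2 : y ≤ Y'hi := by rw [hY'hi]; exact le_inf hyhi hy₂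
  constructor
  · exact add_le_add (add_le_add (psi_lo_le _ hX1 hX2) (psi_lo_le _ hY1 hY2))
      (psi_lo_le _ hwy₁ hwy₂)
  · exact add_le_add (add_le_add (psi_le_hi _ hX1 hX2) (psi_le_hi _ hY1 hY2))
      (psi_le_hi _ hwy₁ hwy₂)
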